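/- arXiv:2508.04717 — 6 statements merged into one kernel-verified Lean document; each statement's English description precedes it below -/
import Mathlib

section
/- For the 3×3 matrix pencil A^α ξ_α of the 1+1 dimensional bulk-viscous Israel-Stewart system, with A⁰ and A¹ as given, the characteristic determinant factors as det[A^α ξ_α] = ρ_Π (u^α ξ_α)[(u^α ξ_α)² - c_Π² Δ^{αβ} ξ_α ξ_β], where c_Π² = P_e + ζ/(τ_Π ρ_Π) and ρ_Π = ε + P + Π. -/
/-- Characteristic determinant factorization for the 1+1 dimensional
bulk-viscous Israel–Stewart system:
`det[A^α ξ_α] = ρ_Π (u^α ξ_α)[(u^α ξ_α)² - c_Π² Δ^{αβ} ξ_α ξ_β]`,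
where `c_Π² = P_e + ζ/(τ_Π ρ_PiV)` and `ρ_Π = ε + P + Π`. -/
theorem bulk_characteristic_determinant (u u0 ε P PiV Pe ζ tauPi rhoPi ξ0 ξ1 : ℝ)
    (hu0 : u0 = Real.sqrt (1 + u ^ 2))
    (hρ : rhoPi = ε + P + PiV) (hρ0 : rhoPi ≠ 0) (hτ : tauPi ≠ 0) :
    Matrix.det
      !![u0 * ξ0 + u * ξ1, rhoPi * (ξ1 + (u / u0) * ξ0), 0;
         Pe * u0 ^ 2 * (ξ1 + (u / u0) * ξ0), rhoPi * (u0 * ξ0 + u * ξ1),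
           u0 ^ 2 * (ξ1 + (u / u0) * ξ0);
         0, (ζ / tauPi) * (ξ1 + (u / u0) * ξ0), u0 * ξ0 + u * ξ1] =
    rhoPi * (u0 * ξ0 + u * ξ1) *
      ((u0 * ξ0 + u * ξ1) ^ 2 -
        (Pe + ζ / (tauPi * rhoPi)) * ((u0 * ξ0 + u * ξ1) ^ 2 - ξ0 ^ 2 + ξ1 ^ 2)) := by
  have hpos : (0:ℝ) < 1 + u ^ 2 := by positivity
  have hu0sq : u0 ^ 2 = 1 + u ^ 2 := by
    rw [hu0, Real.sq_sqrt hpos.le]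
  have hu0ne : u0 ≠ 0 := by
    intro h; rw [h] at hu0sq; simp at hu0sq; nlinarith
  have key : (u0 * ξ0 + u * ξ1) ^ 2 - ξ0 ^ 2 + ξ1 ^ 2 = (u0 * ξ1 + u * ξ0) ^ 2 := by
    linear_combination (ξ0 ^ 2 - ξ1 ^ 2) * hu0sq
  rw [Matrix.det_fin_three, key]
  simp only [Matrix.of_apply, Matrix.cons_val]
  field_simp
  ring
end

section
/- Assume ρ_Π > 0, τ_Π > 0, and c_Π ∈ (0,1). Then the vector r₁ = (-1, 0, P_e)ᵀ satisfies a(ψ) r₁ = (u/u⁰) r₁ and the vectors r_± = (±ρ_Π τ_Π, u⁰ c_Π τ_Π, ±ζ)ᵀ satisfy a(ψ) r_± = λ_± r_± with λ_± = (u ± u⁰ c_Π)/(u⁰ ± u c_Π), where a(ψ) = (A⁰)⁻¹ A¹ for the bulk-viscous Israel-Stewart matrices. -/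
/-- Eigenvectors of `a(ψ) = (A⁰)⁻¹ A¹` for the bulk-viscous Israel–Stewart
system, expressed via `A¹ r = λ A⁰ r`: `r₁ = (-1, 0, P_e)ᵀ` has eigenvalue
`u/u⁰` and `r_± = (±ρ_Π τ_Π, u⁰ c_Π τ_Π, ±ζ)ᵀ` have eigenvalues
`λ_± = (u ± u⁰ c_Π)/(u⁰ ± u c_Π)`. -/
theorem bulk_eigenvectors (u u0 rhoPi tauPi ζ Pe c : ℝ)
    (hu0 : u0 = Real.sqrt (1 + u ^ 2))
    (hρ : 0 < rhoPi) (hτ : 0 < tauPi) (hc0 : 0 < c) (hc1 : c < 1)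
    (hc : c ^ 2 = Pe + ζ / (tauPi * rhoPi)) :
    (Matrix.mulVec
        !![u, rhoPi, 0; Pe * u0 ^ 2, rhoPi * u, u0 ^ 2; 0, ζ / tauPi, u]
        ![-1, 0, Pe] =
      (u / u0) •
        Matrix.mulVec
          !![u0, rhoPi * (u / u0), 0;
             Pe * u0 ^ 2 * (u / u0), rhoPi * u0, u0 ^ 2 * (u / u0);
             0, (ζ / tauPi) * (u / u0), u0]
          ![-1, 0, Pe]) ∧
    (Matrix.mulVec
        !![u, rhoPi, 0; Pe * u0 ^ 2, rhoPi * u, u0 ^ 2; 0, ζ / tauPi, u]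
        ![rhoPi * tauPi, u0 * c * tauPi, ζ] =
      ((u + u0 * c) / (u0 + u * c)) •
        Matrix.mulVec
          !![u0, rhoPi * (u / u0), 0;
             Pe * u0 ^ 2 * (u / u0), rhoPi * u0, u0 ^ 2 * (u / u0);
             0, (ζ / tauPi) * (u / u0), u0]
          ![rhoPi * tauPi, u0 * c * tauPi, ζ]) ∧
    (Matrix.mulVec
        !![u, rhoPi, 0; Pe * u0 ^ 2, rhoPi * u, u0 ^ 2; 0, ζ / tauPi, u]
        ![-(rhoPi * tauPi), u0 * c * tauPi, -ζ] =
      ((u - u0 * c) / (u0 - u * c)) •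
        Matrix.mulVec
          !![u0, rhoPi * (u / u0), 0;
             Pe * u0 ^ 2 * (u / u0), rhoPi * u0, u0 ^ 2 * (u / u0);
             0, (ζ / tauPi) * (u / u0), u0]
          ![-(rhoPi * tauPi), u0 * c * tauPi, -ζ]) := by
  have h1u : (0:ℝ) < 1 + u ^ 2 := by positivity
  have hu0pos : 0 < u0 := hu0 ▸ Real.sqrt_pos.mpr h1u
  have hu0sq : u0 ^ 2 = 1 + u ^ 2 := by
    rw [hu0, Real.sq_sqrt h1u.le]
  have habs : |u| < u0 := by
    rw [← Real.sqrt_sq_eq_abs, hu0]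
    exact Real.sqrt_lt_sqrt (sq_nonneg u) (by linarith)
  have huc : |u * c| < u0 := by
    rw [abs_mul, abs_of_pos hc0]
    calc |u| * c ≤ |u| * 1 := by nlinarith [abs_nonneg u]
      _ < u0 := by simpa using habs
  have hd1 : u0 + u * c ≠ 0 := by
    have := (abs_lt.mp huc).1; intro h; linarith
  have hd2 : u0 - u * c ≠ 0 := by
    have := (abs_lt.mp huc).2; intro h; linarith
  have hζ : ζ = (c ^ 2 - Pe) * (tauPi * rhoPi) := by
    field_simp at hc; linarith
  have hu0ne : u0 ≠ 0 := hu0pos.ne'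
  have hτne : tauPi ≠ 0 := hτ.ne'
  refine ⟨?_, ?_, ?_⟩ <;>
    · funext i
      fin_cases i <;>
        · simp [Matrix.mulVec, dotProduct, Fin.sum_univ_three, hζ]
          field_simp
          try ring_nf
          all_goals
            have hd1' : c * u + u0 ≠ 0 := by intro h; apply hd1; linarith
            have hd2' : -(c * u) + u0 ≠ 0 := by intro h; apply hd2; linarith
            field_simp
            ring_nf
end

section
/- For the bulk-viscous Israel-Stewart system, the genuine nonlinearity coefficient satisfies r_± · ∇_ψ λ_± = (1/(u⁰ ± u c_Π)²)[τ_Π c_Π(1 - c_Π²) + τ_Π ρ_Π ∂c_Π/∂ε + ζ ∂c_Π/∂Π], where ψ = (ε, u, Π), λ_± = (u ± u⁰c_Π)/(u⁰ ± u c_Π), r_± = (±ρ_Π τ_Π, u⁰ c_Π τ_Π, ±ζ)ᵀ, and u⁰ = √(1+u²). -/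
open Real Filter ContinuousLinearMap

private lemma sqrt_hasDerivAt' (u : ℝ) :
    HasDerivAt (fun x : ℝ => Real.sqrt (1 + x ^ 2)) (u / Real.sqrt (1 + u ^ 2)) u := by
  have h1 : HasDerivAt (fun x : ℝ => 1 + x ^ 2) (2 * u) u := by
    simpa using ((hasDerivAt_pow 2 u).const_add 1)
  have h2 := (Real.hasDerivAt_sqrt (by positivity : (1 : ℝ) + u ^ 2 ≠ 0)).comp u h1
  refine h2.congr_deriv ?_
  have hs : Real.sqrt (1 + u ^ 2) ≠ 0 := by positivity
  field_simp

private lemma Lapply' (L : ℝ × ℝ →L[ℝ] ℝ) (a b : ℝ) :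
    L (a, b) = a * L (1, 0) + b * L (0, 1) := by
  have h : (a, b) = a • ((1 : ℝ), (0 : ℝ)) + b • ((0 : ℝ), (1 : ℝ)) := by
    simp [Prod.ext_iff]
  rw [h, map_add, map_smul, map_smul, smul_eq_mul, smul_eq_mul]

private lemma pd1' {C : ℝ × ℝ → ℝ} {a b : ℝ} (hC : DifferentiableAt ℝ C (a, b)) :
    deriv (fun e => C (e, b)) a = fderiv ℝ C (a, b) (1, 0) := by
  have h : HasDerivAt (fun e : ℝ => (e, b)) ((1 : ℝ), (0 : ℝ)) a :=
    (hasDerivAt_id a).prodMk (hasDerivAt_const a b)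
  exact (hC.hasFDerivAt.comp_hasDerivAt a h).deriv

private lemma pd2' {C : ℝ × ℝ → ℝ} {a b : ℝ} (hC : DifferentiableAt ℝ C (a, b)) :
    deriv (fun p => C (a, p)) b = fderiv ℝ C (a, b) (0, 1) := by
  have h : HasDerivAt (fun p : ℝ => (a, p)) ((0 : ℝ), (1 : ℝ)) b :=
    (hasDerivAt_const b a).prodMk (hasDerivAt_id b)
  exact (hC.hasFDerivAt.comp_hasDerivAt b h).deriv

private lemma Fσ_hasFDerivAt (ε u PiV σ : ℝ) (C : ℝ × ℝ → ℝ)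
    (hC : DifferentiableAt ℝ C (ε, PiV))
    (hne : Real.sqrt (1 + u ^ 2) + σ * (u * C (ε, PiV)) ≠ 0) :
    HasFDerivAt (fun ψ : Fin 3 → ℝ =>
      (ψ 1 + σ * (Real.sqrt (1 + (ψ 1) ^ 2) * C (ψ 0, ψ 2))) /
        (Real.sqrt (1 + (ψ 1) ^ 2) + σ * (ψ 1 * C (ψ 0, ψ 2)))) (
      let s := Real.sqrt (1 + u ^ 2)
      let c := C (ε, PiV)
      let L := (fderiv ℝ C (ε, PiV)).comp
        ((ContinuousLinearMap.proj 0 : (Fin 3 → ℝ) →L[ℝ] ℝ).prod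
         (ContinuousLinearMap.proj 2))
      let p1 : (Fin 3 → ℝ) →L[ℝ] ℝ := ContinuousLinearMap.proj 1
      let N' := p1 + σ • (s • L + c • ((u / s) • p1))
      let D' := (u / s) • p1 + σ • (u • L + c • p1)
      (((s + σ * (u * c)) ^ 2)⁻¹ • ((s + σ * (u * c)) • N' - (u + σ * (s * c)) • D')))
      ![ε, u, PiV] := by
  set s := Real.sqrt (1 + u ^ 2) with hs
  set c := C (ε, PiV) with hcv
  set ψ₀ : Fin 3 → ℝ := ![ε, u, PiV] with hψ₀
  set p1 : (Fin 3 → ℝ) →L[ℝ] ℝ := ContinuousLinearMap.proj 1 with hp1d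
  set L := (fderiv ℝ C (ε, PiV)).comp
      ((ContinuousLinearMap.proj 0 : (Fin 3 → ℝ) →L[ℝ] ℝ).prod
       (ContinuousLinearMap.proj 2)) with hLd
  have hp1 : HasFDerivAt (fun ψ : Fin 3 → ℝ => ψ 1) p1 ψ₀ :=
    (ContinuousLinearMap.proj 1 : (Fin 3 → ℝ) →L[ℝ] ℝ).hasFDerivAt
  have hπ : HasFDerivAt (fun ψ : Fin 3 → ℝ => ((ψ 0 : ℝ), (ψ 2 : ℝ)))
      ((ContinuousLinearMap.proj 0 : (Fin 3 → ℝ) →L[ℝ] ℝ).prod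
       (ContinuousLinearMap.proj 2)) ψ₀ :=
    ((ContinuousLinearMap.proj 0 : (Fin 3 → ℝ) →L[ℝ] ℝ).hasFDerivAt).prodMk
      ((ContinuousLinearMap.proj 2 : (Fin 3 → ℝ) →L[ℝ] ℝ).hasFDerivAt)
  have hc : HasFDerivAt (fun ψ : Fin 3 → ℝ => C (ψ 0, ψ 2)) L ψ₀ :=
    hC.hasFDerivAt.comp ψ₀ hπ
  have hsq : HasFDerivAt (fun ψ : Fin 3 → ℝ => Real.sqrt (1 + (ψ 1) ^ 2))
      ((u / s) • p1) ψ₀ :=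
    by have := (sqrt_hasDerivAt' u).comp_hasFDerivAt ψ₀ hp1; exact this
  have hN : HasFDerivAt (fun ψ : Fin 3 → ℝ =>
      ψ 1 + σ * (Real.sqrt (1 + (ψ 1) ^ 2) * C (ψ 0, ψ 2)))
      (p1 + σ • (s • L + c • ((u / s) • p1))) ψ₀ :=
    hp1.add (((hsq.mul hc)).const_mul σ)
  have hD : HasFDerivAt (fun ψ : Fin 3 → ℝ =>
      Real.sqrt (1 + (ψ 1) ^ 2) + σ * (ψ 1 * C (ψ 0, ψ 2)))
      ((u / s) • p1 + σ • (u • L + c • p1)) ψ₀ :=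
    hsq.add (((hp1.mul hc)).const_mul σ)
  have hDne : (Real.sqrt (1 + (ψ₀ 1) ^ 2) + σ * (ψ₀ 1 * C (ψ₀ 0, ψ₀ 2))) ≠ 0 := hne
  have hinv := (hasDerivAt_inv hDne).comp_hasFDerivAt ψ₀ hD
  have hF := hN.mul hinv
  simp only [div_eq_mul_inv]
  refine hF.congr_fderiv ?_
  have hD0 : ψ₀ 1 = u := rfl
  have hC0 : C (ψ₀ 0, ψ₀ 2) = c := rfl
  have hs0 : Real.sqrt (1 + (ψ₀ 1) ^ 2) = s := rfl
  have hd : s + σ * (u * c) ≠ 0 := hne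
  ext v
  simp only [ContinuousLinearMap.add_apply, ContinuousLinearMap.smul_apply,
    ContinuousLinearMap.sub_apply, smul_eq_mul, hD0, hC0, hs0, Function.comp]
  field_simp
  ring

private lemma Fσ_not_diff (ε u PiV σ : ℝ) (C : ℝ × ℝ → ℝ) (hσ : σ ^ 2 = 1)
    (hd0 : Real.sqrt (1 + u ^ 2) + σ * (u * C (ε, PiV)) = 0) :
    ¬ DifferentiableAt ℝ (fun ψ : Fin 3 → ℝ =>
      (ψ 1 + σ * (Real.sqrt (1 + (ψ 1) ^ 2) * C (ψ 0, ψ 2))) /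
        (Real.sqrt (1 + (ψ 1) ^ 2) + σ * (ψ 1 * C (ψ 0, ψ 2)))) ![ε, u, PiV] := by
  intro hdiff
  set s := Real.sqrt (1 + u ^ 2) with hsdef
  set c := C (ε, PiV) with hcdef
  have hspos : 0 < s := by positivity
  have hs2 : s ^ 2 = 1 + u ^ 2 := Real.sq_sqrt (by positivity)
  have hn0 : u + σ * (s * c) ≠ 0 := by
    intro h
    have h1 : σ * (u * c) = -s := by linarith
    have h2 : σ * (s * c) = -u := by linarith
    have h3 : (σ * (u * c)) * (σ * (s * c)) = s * u := by rw [h1, h2]; ring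
    have h4 : u * s * (c ^ 2 - 1) = 0 := by
      linear_combination h3 - u * s * c ^ 2 * hσ
    rcases mul_eq_zero.1 h4 with h5 | h5
    · rcases mul_eq_zero.1 h5 with h6 | h6
      · rw [h6] at h1; simp at h1; linarith
      · linarith
    · have hc2 : c ^ 2 = 1 := by linarith
      have h7 : (σ * (s * c)) ^ 2 = u ^ 2 := by rw [h2]; ring
      have h8 : s ^ 2 * c ^ 2 = u ^ 2 := by
        linear_combination h7 - s ^ 2 * c ^ 2 * hσ
      have h9 : s ^ 2 = u ^ 2 := by linear_combination h8 - s ^ 2 * hc2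
      linarith [hs2, h9]
  have hdf : HasDerivAt (fun x : ℝ => Real.sqrt (1 + x ^ 2) + σ * (x * c))
      (u / s + σ * c) u := by
    have h := (sqrt_hasDerivAt' u).add (((hasDerivAt_id u).mul_const c).const_mul σ)
    exact h.congr_deriv (by simp [hsdef])
  have hd'ne : u / s + σ * c ≠ 0 := by
    intro h
    have : u + σ * (s * c) = 0 := by
      field_simp at h
      nlinarith [h]
    exact hn0 this
  have hev : ∀ᶠ x in nhdsWithin u {u}ᶜ,
      Real.sqrt (1 + x ^ 2) + σ * (x * c) ≠ 0 := by
    have := hdf.eventually_ne (c := Real.sqrt (1 + u ^ 2) + σ * (u * c)) hd'ne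
    filter_upwards [this] with x hx
    intro h0
    apply hx
    rw [h0, hd0]
  have hpath : Continuous (fun x : ℝ => (![ε, x, PiV] : Fin 3 → ℝ)) := by
    apply continuous_pi
    intro i
    fin_cases i <;> simp <;> continuity
  have hcomp : Tendsto (fun x : ℝ =>
      (x + σ * (Real.sqrt (1 + x ^ 2) * c)) / (Real.sqrt (1 + x ^ 2) + σ * (x * c)))
      (nhdsWithin u {u}ᶜ) (nhds 0) := by
    have h1 := hdiff.continuousAt
    have h2 := h1.tendsto.comp (hpath.tendsto u)
    have h3 : Tendsto (fun x : ℝ =>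
        (x + σ * (Real.sqrt (1 + x ^ 2) * c)) / (Real.sqrt (1 + x ^ 2) + σ * (x * c)))
        (nhds u) (nhds ((u + σ * (s * c)) / (s + σ * (u * c)))) := by
      simpa [Function.comp_def, Matrix.cons_val_zero, Matrix.cons_val_one, Matrix.head_cons,
        Matrix.cons_val_two, Matrix.tail_cons, hsdef, hcdef] using h2
    rw [hd0, div_zero] at h3
    exact h3.mono_left nhdsWithin_le_nhds
  have hnum : Tendsto (fun x : ℝ => x + σ * (Real.sqrt (1 + x ^ 2) * c))
      (nhdsWithin u {u}ᶜ) (nhds (u + σ * (s * c))) := by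
    have : Continuous (fun x : ℝ => x + σ * (Real.sqrt (1 + x ^ 2) * c)) := by
      continuity
    exact (this.tendsto u).mono_left nhdsWithin_le_nhds
  have hden : Tendsto (fun x : ℝ => Real.sqrt (1 + x ^ 2) + σ * (x * c))
      (nhdsWithin u {u}ᶜ) (nhds 0) := by
    have : Continuous (fun x : ℝ => Real.sqrt (1 + x ^ 2) + σ * (x * c)) := by
      continuity
    have h := (this.tendsto u).mono_left
      (nhdsWithin_le_nhds : nhdsWithin u ({u}ᶜ : Set ℝ) ≤ nhds u)
    rwa [hd0] at h
  have habs_den : Tendsto (fun x : ℝ => |Real.sqrt (1 + x ^ 2) + σ * (x * c)|)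
      (nhdsWithin u {u}ᶜ) (nhdsWithin 0 (Set.Ioi 0)) := by
    rw [tendsto_nhdsWithin_iff]
    constructor
    · simpa using hden.abs
    · filter_upwards [hev] with x hx
      exact abs_pos.2 hx
  have hinv : Tendsto (fun x : ℝ => |Real.sqrt (1 + x ^ 2) + σ * (x * c)|⁻¹)
      (nhdsWithin u {u}ᶜ) atTop := habs_den.inv_tendsto_nhdsGT_zero
  have habs : Tendsto (fun x : ℝ =>
      |(x + σ * (Real.sqrt (1 + x ^ 2) * c)) / (Real.sqrt (1 + x ^ 2) + σ * (x * c))|)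
      (nhdsWithin u {u}ᶜ) atTop := by
    have h := (hnum.abs.pos_mul_atTop (abs_pos.2 hn0) hinv)
    refine h.congr fun x => ?_
    rw [abs_div, div_eq_mul_inv]
  exact not_tendsto_atTop_of_tendsto_nhds hcomp.abs habs

private lemma Fσ_eval (ε u PiV rhoPi ζ tauPi σ : ℝ) (C : ℝ × ℝ → ℝ)
    (hσ : σ = 1 ∨ σ = -1) (hC : DifferentiableAt ℝ C (ε, PiV)) :
    fderiv ℝ (fun ψ : Fin 3 → ℝ =>
      (ψ 1 + σ * (Real.sqrt (1 + (ψ 1) ^ 2) * C (ψ 0, ψ 2))) /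
        (Real.sqrt (1 + (ψ 1) ^ 2) + σ * (ψ 1 * C (ψ 0, ψ 2)))) ![ε, u, PiV]
      ![σ * (rhoPi * tauPi), Real.sqrt (1 + u ^ 2) * C (ε, PiV) * tauPi, σ * ζ] =
    (1 / (Real.sqrt (1 + u ^ 2) + σ * (u * C (ε, PiV))) ^ 2) *
      (tauPi * C (ε, PiV) * (1 - C (ε, PiV) ^ 2) +
        tauPi * rhoPi * fderiv ℝ C (ε, PiV) (1, 0) +
        ζ * fderiv ℝ C (ε, PiV) (0, 1)) := by
  have hσ2 : σ ^ 2 = 1 := by rcases hσ with h | h <;> rw [h] <;> norm_num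
  have hspos : (0 : ℝ) < Real.sqrt (1 + u ^ 2) := by positivity
  have hs0 : Real.sqrt (1 + u ^ 2) ≠ 0 := ne_of_gt hspos
  have hs2 : Real.sqrt (1 + u ^ 2) ^ 2 = 1 + u ^ 2 := Real.sq_sqrt (by positivity)
  by_cases hne : Real.sqrt (1 + u ^ 2) + σ * (u * C (ε, PiV)) = 0
  · rw [fderiv_zero_of_not_differentiableAt
      (Fσ_not_diff ε u PiV σ C hσ2 hne), hne]
    norm_num
  · rw [(Fσ_hasFDerivAt ε u PiV σ C hC hne).fderiv]
    simp only [ContinuousLinearMap.smul_apply, ContinuousLinearMap.sub_apply,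
      ContinuousLinearMap.add_apply, ContinuousLinearMap.comp_apply,
      ContinuousLinearMap.proj_apply, ContinuousLinearMap.prod_apply, smul_eq_mul,
      Matrix.cons_val_zero, Matrix.cons_val_one, Matrix.head_cons,
      Matrix.cons_val_two, Matrix.tail_cons]
    rw [Lapply']
    have e2 : Real.sqrt (1 + u ^ 2) ^ 2 = 1 + u ^ 2 := hs2
    have e3 : Real.sqrt (1 + u ^ 2) ^ 3 = (1 + u ^ 2) * Real.sqrt (1 + u ^ 2) := by
      rw [pow_succ, e2]
    have e4 : Real.sqrt (1 + u ^ 2) ^ 4 = (1 + u ^ 2) ^ 2 := by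
      rw [show (4 : ℕ) = 2 * 2 from rfl, pow_mul, e2]
    have e5 : Real.sqrt (1 + u ^ 2) ^ 5 = (1 + u ^ 2) ^ 2 * Real.sqrt (1 + u ^ 2) := by
      rw [pow_succ, e4]
    field_simp
    congr 1
    rcases hσ with h | h <;> subst h <;> linear_combination (C (ε, PiV) * tauPi + (tauPi * rhoPi * (fderiv ℝ C (ε, PiV)) (1, 0) + ζ * (fderiv ℝ C (ε, PiV)) (0, 1)) - C (ε, PiV) ^ 3 * tauPi) * e2

/-- Genuine nonlinearity coefficient for the bulk-viscous Israel–Stewart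
system: with `ψ = (ε, u, PiV)`, `λ_± = (u ± u⁰ c_PiV)/(u⁰ ± u c_PiV)`,
`r_± = (±ρ_Π τ_PiV, u⁰ c_Π τ_PiV, ±ζ)ᵀ`, `u⁰ = √(1+u²)`, one has
`r_± · ∇_ψ λ_± = (u⁰ ± u c_PiV)⁻² [τ_Π c_Π (1 - c_Π²) + τ_Π ρ_Π ∂c_Π/∂ε + ζ ∂c_Π/∂PiV]`. -/
theorem bulk_genuine_nonlinearity_coefficient
    (ε u PiV P rhoPi ζ tauPi : ℝ) (cPi : ℝ → ℝ → ℝ)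
    (hρ : rhoPi = ε + P + PiV)
    (hcdiff : DifferentiableAt ℝ (fun p : ℝ × ℝ => cPi p.1 p.2) (ε, PiV)) :
    (fderiv ℝ
        (fun ψ : Fin 3 → ℝ =>
          (ψ 1 + Real.sqrt (1 + (ψ 1) ^ 2) * cPi (ψ 0) (ψ 2)) /
            (Real.sqrt (1 + (ψ 1) ^ 2) + ψ 1 * cPi (ψ 0) (ψ 2)))
        ![ε, u, PiV]
        ![rhoPi * tauPi, Real.sqrt (1 + u ^ 2) * cPi ε PiV * tauPi, ζ] =
      (1 / (Real.sqrt (1 + u ^ 2) + u * cPi ε PiV) ^ 2) *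
        (tauPi * cPi ε PiV * (1 - (cPi ε PiV) ^ 2) +
          tauPi * rhoPi * deriv (fun e => cPi e PiV) ε +
          ζ * deriv (fun p => cPi ε p) PiV)) ∧
    (fderiv ℝ
        (fun ψ : Fin 3 → ℝ =>
          (ψ 1 - Real.sqrt (1 + (ψ 1) ^ 2) * cPi (ψ 0) (ψ 2)) /
            (Real.sqrt (1 + (ψ 1) ^ 2) - ψ 1 * cPi (ψ 0) (ψ 2)))
        ![ε, u, PiV]
        ![-(rhoPi * tauPi), Real.sqrt (1 + u ^ 2) * cPi ε PiV * tauPi, -ζ] =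
      (1 / (Real.sqrt (1 + u ^ 2) - u * cPi ε PiV) ^ 2) *
        (tauPi * cPi ε PiV * (1 - (cPi ε PiV) ^ 2) +
          tauPi * rhoPi * deriv (fun e => cPi e PiV) ε +
          ζ * deriv (fun p => cPi ε p) PiV)) := by
  have h1 : deriv (fun e => cPi e PiV) ε
      = fderiv ℝ (fun p : ℝ × ℝ => cPi p.1 p.2) (ε, PiV) (1, 0) := pd1' hcdiff
  have h2 : deriv (fun p => cPi ε p) PiV
      = fderiv ℝ (fun p : ℝ × ℝ => cPi p.1 p.2) (ε, PiV) (0, 1) := pd2' hcdiff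
  constructor
  · have h := Fσ_eval ε u PiV rhoPi ζ tauPi 1 (fun p : ℝ × ℝ => cPi p.1 p.2)
      (Or.inl rfl) hcdiff
    simp only [one_mul] at h
    rw [h1, h2]
    exact h
  · have h := Fσ_eval ε u PiV rhoPi ζ tauPi (-1) (fun p : ℝ × ℝ => cPi p.1 p.2)
      (Or.inr rfl) hcdiff
    simp only [neg_one_mul, ← sub_eq_add_neg] at h
    rw [h1, h2]
    exact h
end

section
/- Assume c_Π* ∈ (0,1), ε + P > 0, τ_Π* > 0. At the reference state ψ* = (ε, u, 0), the mode λ_± is genuinely nonlinear (r_±* · ∇_ψ λ_±(ψ*) ≠ 0) if and only if (ε + P) ∂c_Π*/∂ε + c_Π*(1 - c_Π*²) + (ζ*/τ_Π*) ∂c_Π/∂Π ≠ 0; in particular, if ∂c_Π/∂Π vanishes at ψ*, genuine nonlinearity is equivalent to (ε+P)∂c_Π*/∂ε + c_Π*(1 - c_Π*²) ≠ 0. -/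
/-- At the reference state `ψ* = (ε, u, 0)` (so `ρ_Π* = ε + P`), the mode `λ_±`
of the bulk-viscous Israel–Stewart system is genuinely nonlinear
(`r_±* · ∇_ψ λ_±(ψ*) ≠ 0`) iff
`(ε + P) ∂c_Π*/∂ε + c_Π*(1 - c_Π*²) + (ζ*/τ_Π*) ∂c_Π/∂Π ≠ 0`; in particular if
`∂c_Π/∂Π = 0` at `ψ*`, genuine nonlinearity is equivalent to
`(ε+P) ∂c_Π*/∂ε + c_Π*(1 - c_Π*²) ≠ 0`. Here
`r_±·∇λ_± = (u⁰ ± u c)⁻² [τ c (1-c²) + τ ρ ∂c/∂ε + ζ ∂c/∂Π]` with `u⁰ = √(1+u²)`. -/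
theorem bulk_genuine_nonlinearity_criterion (ε P u ζ tauPi c cE cP Dp Dm : ℝ)
    (hc0 : 0 < c) (hc1 : c < 1) (heP : 0 < ε + P) (hτ : 0 < tauPi)
    (hDp : Dp = ((Real.sqrt (1 + u ^ 2) + u * c) ^ 2)⁻¹ *
      (tauPi * c * (1 - c ^ 2) + tauPi * (ε + P) * cE + ζ * cP))
    (hDm : Dm = ((Real.sqrt (1 + u ^ 2) - u * c) ^ 2)⁻¹ *
      (tauPi * c * (1 - c ^ 2) + tauPi * (ε + P) * cE + ζ * cP)) :
    (Dp ≠ 0 ↔ (ε + P) * cE + c * (1 - c ^ 2) + (ζ / tauPi) * cP ≠ 0) ∧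
    (Dm ≠ 0 ↔ (ε + P) * cE + c * (1 - c ^ 2) + (ζ / tauPi) * cP ≠ 0) ∧
    (cP = 0 →
      ((Dp ≠ 0 ↔ (ε + P) * cE + c * (1 - c ^ 2) ≠ 0) ∧
       (Dm ≠ 0 ↔ (ε + P) * cE + c * (1 - c ^ 2) ≠ 0))) := by
  set s := Real.sqrt (1 + u ^ 2) with hs
  have habs : |u * c| < s := by
    have h1 : |u| < s := by
      have h2 : u ^ 2 < 1 + u ^ 2 := by linarith
      calc |u| = Real.sqrt (u ^ 2) := (Real.sqrt_sq_eq_abs u).symm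
        _ < s := Real.sqrt_lt_sqrt (by positivity) h2
    calc |u * c| = |u| * c := by rw [abs_mul, abs_of_pos hc0]
      _ ≤ |u| * 1 := by nlinarith [abs_nonneg u]
      _ = |u| := by ring
      _ < s := h1
  have hp : s + u * c > 0 := by
    have := neg_lt_of_abs_lt habs; linarith
  have hm : s - u * c > 0 := by
    have := lt_of_abs_lt habs; linarith
  have hpne : ((s + u * c) ^ 2)⁻¹ ≠ 0 := by positivity
  have hmne : ((s - u * c) ^ 2)⁻¹ ≠ 0 := by positivity
  have hbr : tauPi * c * (1 - c ^ 2) + tauPi * (ε + P) * cE + ζ * cP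
      = tauPi * ((ε + P) * cE + c * (1 - c ^ 2) + (ζ / tauPi) * cP) := by
    field_simp; ring
  have key : ∀ x : ℝ, x ≠ 0 →
      (x * (tauPi * c * (1 - c ^ 2) + tauPi * (ε + P) * cE + ζ * cP) ≠ 0 ↔
        (ε + P) * cE + c * (1 - c ^ 2) + (ζ / tauPi) * cP ≠ 0) := by
    intro x hx
    rw [hbr, mul_ne_zero_iff, mul_ne_zero_iff]
    constructor
    · exact fun h => h.2.2
    · exact fun h => ⟨hx, hτ.ne', h⟩
  have hP := key _ hpne
  have hM := key _ hmne
  rw [hDp, hDm]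
  refine ⟨hP, hM, fun hcp => ?_⟩
  subst hcp
  simp only [mul_zero, add_zero] at hP hM ⊢
  exact ⟨hP, hM⟩
end

section
/- For the diffusion Israel-Stewart system at the reference state q* = 0 with v fixed, the sound modes λ₁± = (u ± u⁰c₁)/(u⁰ ± uc₁) with c₁ = 1/√3 satisfy r₁±* · ∇_ψ λ₁± = (1 - c₁²)/[u⁰(u⁰ ± uc₁)²] = (2/3)/[u⁰(u⁰ ± u/√3)²] > 0, hence these modes are always genuinely nonlinear. -/
private lemma sqrt_deriv (u : ℝ) :
    HasDerivAt (fun w : ℝ => Real.sqrt (1 + w ^ 2)) (u / Real.sqrt (1 + u ^ 2)) u := by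
  have h1 : (0:ℝ) < 1 + u ^ 2 := by positivity
  have hinner : HasDerivAt (fun w : ℝ => 1 + w ^ 2) (2 * u) u := by
    simpa using ((hasDerivAt_pow 2 u).const_add 1)
  have := (Real.hasDerivAt_sqrt h1.ne').comp u hinner
  refine this.congr_deriv (Eq.symm ?_)
  have hs : (0:ℝ) < Real.sqrt (1 + u ^ 2) := Real.sqrt_pos.mpr h1
  field_simp

private lemma aux (u e : ℝ) (he : e = 1 ∨ e = -1) :
    HasDerivAt
      (fun w : ℝ =>
        (w + e * (Real.sqrt (1 + w ^ 2) * (1 / Real.sqrt 3))) /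
          (Real.sqrt (1 + w ^ 2) + e * (w * (1 / Real.sqrt 3))))
      ((1 - (1 / Real.sqrt 3) ^ 2) /
        (Real.sqrt (1 + u ^ 2) *
          (Real.sqrt (1 + u ^ 2) + e * (u * (1 / Real.sqrt 3))) ^ 2)) u := by
  set c : ℝ := 1 / Real.sqrt 3 with hc
  set s : ℝ := Real.sqrt (1 + u ^ 2) with hsdef
  have h1 : (0:ℝ) < 1 + u ^ 2 := by positivity
  have hs : (0:ℝ) < s := Real.sqrt_pos.mpr h1
  have hs2 : s ^ 2 = 1 + u ^ 2 := Real.sq_sqrt h1.le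
  have hc1 : c < 1 := by
    rw [hc]
    rw [div_lt_one (by positivity)]
    nlinarith [Real.sq_sqrt (by norm_num : (3:ℝ) ≥ 0), Real.sqrt_nonneg 3]
  have hc0 : 0 < c := by positivity
  have husc : |u| * c < s := by
    have h2 : |u| < s := by
      have : |u| ^ 2 < s ^ 2 := by rw [hs2, sq_abs]; linarith
      exact lt_of_pow_lt_pow_left₀ 2 hs.le this
    calc |u| * c ≤ |u| * 1 := by nlinarith [abs_nonneg u]
    _ = |u| := by ring
    _ < s := h2
  have hD : 0 < s + e * (u * c) := by
    have : |e * (u * c)| = |u| * c := by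
      rcases he with h | h <;> simp [h, abs_mul, abs_of_pos hc0]
    nlinarith [neg_abs_le (e * (u * c)), this]
  have hN : HasDerivAt (fun w : ℝ => w + e * (Real.sqrt (1 + w ^ 2) * c))
      (1 + e * (u / s * c)) u :=
    (hasDerivAt_id u).add (((sqrt_deriv u).mul_const c).const_mul e)
  have hDd : HasDerivAt (fun w : ℝ => Real.sqrt (1 + w ^ 2) + e * (w * c))
      (u / s + e * (1 * c)) u :=
    (sqrt_deriv u).add (((hasDerivAt_id u).mul_const c).const_mul e)
  have := hN.div hDd hD.ne'
  refine this.congr_deriv (Eq.symm ?_)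
  have he2 : e ^ 2 = 1 := by rcases he with h | h <;> simp [h]
  rw [← hsdef]
  field_simp
  congr 1
  linear_combination (c ^ 2 * s ^ 2 - c ^ 2 * u ^ 2) * he2 - (1 - c ^ 2) * hs2

/-- Sound modes of the diffusion Israel–Stewart system at the reference state
`q* = 0`: with `c₁ = 1/√3` and `u⁰ = √(1+u²)`, the modes
`λ₁± = (u ± u⁰c₁)/(u⁰ ± uc₁)` satisfy
`r₁±* · ∇_ψ λ₁± = ∂λ₁±/∂u = (1 - c₁²)/[u⁰(u⁰ ± uc₁)²] = (2/3)/[u⁰(u⁰ ± u/√3)²] > 0`,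
hence these modes are always genuinely nonlinear. -/
theorem diffusion_sound_modes_genuinely_nonlinear (u : ℝ) :
    (HasDerivAt
        (fun w : ℝ =>
          (w + Real.sqrt (1 + w ^ 2) * (1 / Real.sqrt 3)) /
            (Real.sqrt (1 + w ^ 2) + w * (1 / Real.sqrt 3)))
        ((1 - (1 / Real.sqrt 3) ^ 2) /
          (Real.sqrt (1 + u ^ 2) *
            (Real.sqrt (1 + u ^ 2) + u * (1 / Real.sqrt 3)) ^ 2)) u) ∧
    (HasDerivAt
        (fun w : ℝ =>
          (w - Real.sqrt (1 + w ^ 2) * (1 / Real.sqrt 3)) /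
            (Real.sqrt (1 + w ^ 2) - w * (1 / Real.sqrt 3)))
        ((1 - (1 / Real.sqrt 3) ^ 2) /
          (Real.sqrt (1 + u ^ 2) *
            (Real.sqrt (1 + u ^ 2) - u * (1 / Real.sqrt 3)) ^ 2)) u) ∧
    ((1 - (1 / Real.sqrt 3) ^ 2) /
        (Real.sqrt (1 + u ^ 2) *
          (Real.sqrt (1 + u ^ 2) + u * (1 / Real.sqrt 3)) ^ 2) =
      (2 / 3) /
        (Real.sqrt (1 + u ^ 2) *
          (Real.sqrt (1 + u ^ 2) + u * (1 / Real.sqrt 3)) ^ 2)) ∧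
    ((1 - (1 / Real.sqrt 3) ^ 2) /
        (Real.sqrt (1 + u ^ 2) *
          (Real.sqrt (1 + u ^ 2) - u * (1 / Real.sqrt 3)) ^ 2) =
      (2 / 3) /
        (Real.sqrt (1 + u ^ 2) *
          (Real.sqrt (1 + u ^ 2) - u * (1 / Real.sqrt 3)) ^ 2)) ∧
    0 < (1 - (1 / Real.sqrt 3) ^ 2) /
        (Real.sqrt (1 + u ^ 2) *
          (Real.sqrt (1 + u ^ 2) + u * (1 / Real.sqrt 3)) ^ 2) ∧
    0 < (1 - (1 / Real.sqrt 3) ^ 2) /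
        (Real.sqrt (1 + u ^ 2) *
          (Real.sqrt (1 + u ^ 2) - u * (1 / Real.sqrt 3)) ^ 2) := by
  have h1 : (0:ℝ) < 1 + u ^ 2 := by positivity
  have hs : (0:ℝ) < Real.sqrt (1 + u ^ 2) := Real.sqrt_pos.mpr h1
  have hs2 : Real.sqrt (1 + u ^ 2) ^ 2 = 1 + u ^ 2 := Real.sq_sqrt h1.le
  have hc2 : ((1 : ℝ) / Real.sqrt 3) ^ 2 = 1 / 3 := by
    rw [div_pow, one_pow, Real.sq_sqrt (by norm_num : (3:ℝ) ≥ 0)]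
  have h23 : 1 - ((1 : ℝ) / Real.sqrt 3) ^ 2 = 2 / 3 := by rw [hc2]; norm_num
  have hDp : ∀ e : ℝ, e = 1 ∨ e = -1 →
      0 < Real.sqrt (1 + u ^ 2) + e * (u * (1 / Real.sqrt 3)) := by
    intro e he
    have hc0 : 0 < (1 : ℝ) / Real.sqrt 3 := by positivity
    have hc1 : (1 : ℝ) / Real.sqrt 3 < 1 := by
      rw [div_lt_one (by positivity)]
      nlinarith [Real.sq_sqrt (by norm_num : (3:ℝ) ≥ 0), Real.sqrt_nonneg 3]
    have h2 : |u| < Real.sqrt (1 + u ^ 2) := by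
      have : |u| ^ 2 < Real.sqrt (1 + u ^ 2) ^ 2 := by rw [hs2, sq_abs]; linarith
      exact lt_of_pow_lt_pow_left₀ 2 hs.le this
    have : |e * (u * (1 / Real.sqrt 3))| = |u| * (1 / Real.sqrt 3) := by
      rcases he with h | h <;> simp [h, abs_mul, abs_of_pos hc0]
    nlinarith [neg_abs_le (e * (u * (1 / Real.sqrt 3))), abs_nonneg u]
  have hDp1 := hDp 1 (Or.inl rfl)
  have hDp2 := hDp (-1) (Or.inr rfl)
  refine ⟨?_, ?_, by rw [h23], by rw [h23], ?_, ?_⟩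
  · simpa using aux u 1 (Or.inl rfl)
  · have := aux u (-1) (Or.inr rfl)
    simp only [neg_mul, one_mul, ← sub_eq_add_neg] at this
    exact this
  · rw [h23]
    have : 0 < Real.sqrt (1 + u ^ 2) + u * (1 / Real.sqrt 3) := by simpa using hDp1
    positivity
  · rw [h23]
    have : 0 < Real.sqrt (1 + u ^ 2) - u * (1 / Real.sqrt 3) := by
      simpa [sub_eq_add_neg] using hDp2
    positivity
end

section
/- For the diffusion Israel-Stewart system at the reference state q* = 0, the diffusive modes λ₂± = (u ± u⁰c₂*)/(u⁰ ± uc₂*) with eigenvectors r₂±* = (0, ±T, 0, -u⁰nc₂*)ᵀ satisfy r₂±* · ∇_ψ λ₂± = (u⁰ ± uc₂*)^{-2} T ∂c₂*/∂T; hence λ₂± are genuinely nonlinear at ψ* if and only if ∂c₂*/∂T ≠ 0. -/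
open Real

lemma aux_diffusion
    (ε T u n σ : ℝ) (c₂ : ℝ → ℝ → ℝ → ℝ)
    (hden : Real.sqrt (1 + u ^ 2) + σ * (u * c₂ ε T 0) ≠ 0)
    (hcdiff : DifferentiableAt ℝ
      (fun p : ℝ × ℝ × ℝ => c₂ p.1 p.2.1 p.2.2) (ε, T, 0))
    (hcq : deriv (fun q => c₂ ε T q) 0 = 0) :
    fderiv ℝ
        (fun ψ : Fin 4 → ℝ =>
          (ψ 2 + σ * (Real.sqrt (1 + (ψ 2) ^ 2) * c₂ (ψ 0) (ψ 1) (ψ 3))) /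
            (Real.sqrt (1 + (ψ 2) ^ 2) + σ * (ψ 2 * c₂ (ψ 0) (ψ 1) (ψ 3))))
        ![ε, T, u, 0]
        ![0, σ * T, 0, -(Real.sqrt (1 + u ^ 2) * n * c₂ ε T 0)] =
      σ ^ 2 * (((Real.sqrt (1 + u ^ 2) + σ * (u * c₂ ε T 0)) ^ 2)⁻¹ * T *
        deriv (fun T' => c₂ ε T' 0) T) := by
  set s : ℝ := Real.sqrt (1 + u ^ 2) with hs
  set c : ℝ := c₂ ε T 0 with hc
  set w : ℝ := s * n * c with hw
  set dT : ℝ := deriv (fun T' => c₂ ε T' 0) T with hdT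
  set p : Fin 4 → ℝ := ![ε, T, u, 0] with hp
  set v : Fin 4 → ℝ := ![0, σ * T, 0, -w] with hv
  set Lc := fderiv ℝ (fun p : ℝ × ℝ × ℝ => c₂ p.1 p.2.1 p.2.2) (ε, T, 0) with hLc
  have hLcF : HasFDerivAt (fun p : ℝ × ℝ × ℝ => c₂ p.1 p.2.1 p.2.2) Lc (ε, T, 0) :=
    hcdiff.hasFDerivAt
  -- partial derivatives through Lc
  have hline1 : HasDerivAt (fun t : ℝ => ((ε : ℝ), t, (0 : ℝ))) ((0 : ℝ), (1 : ℝ), (0 : ℝ)) T :=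
    (hasDerivAt_const T ε).prodMk ((hasDerivAt_id T).prodMk (hasDerivAt_const T (0:ℝ)))
  have hT1 : HasDerivAt (fun t : ℝ => c₂ ε t 0) (Lc ((0 : ℝ), (1 : ℝ), (0 : ℝ))) T := by
    simpa [Function.comp_def] using hLcF.comp_hasDerivAt_of_eq T hline1 rfl
  have hdT1 : Lc ((0 : ℝ), (1 : ℝ), (0 : ℝ)) = dT := hT1.deriv.symm
  have hline2 : HasDerivAt (fun t : ℝ => ((ε : ℝ), (T : ℝ), t)) ((0 : ℝ), (0 : ℝ), (1 : ℝ)) 0 :=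
    (hasDerivAt_const (0:ℝ) ε).prodMk ((hasDerivAt_const (0:ℝ) T).prodMk (hasDerivAt_id (0:ℝ)))
  have hq1 : HasDerivAt (fun q : ℝ => c₂ ε T q) (Lc ((0 : ℝ), (0 : ℝ), (1 : ℝ))) 0 := by
    simpa [Function.comp_def] using hLcF.comp_hasDerivAt_of_eq 0 hline2 rfl
  have hq0 : Lc ((0 : ℝ), (0 : ℝ), (1 : ℝ)) = 0 := by rw [← hq1.deriv]; exact hcq
  have hLcv : Lc ((0 : ℝ), σ * T, -w) = σ * T * dT := by
    have hdec : ((0 : ℝ), σ * T, -w)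
        = (σ * T) • ((0 : ℝ), (1 : ℝ), (0 : ℝ)) + (-w) • ((0 : ℝ), (0 : ℝ), (1 : ℝ)) := by
      simp [Prod.ext_iff]
    rw [hdec, map_add, map_smul, map_smul, hdT1, hq0, smul_eq_mul, smul_eq_mul]
    ring
  -- the 1-D slice function
  have hlin3 : HasDerivAt (fun t : ℝ => ((ε : ℝ), T + t * (σ * T), t * -w))
      ((0 : ℝ), σ * T, -w) 0 := by
    refine (hasDerivAt_const (0:ℝ) ε).prodMk (HasDerivAt.prodMk ?_ ?_)
    · simpa using ((hasDerivAt_id (0 : ℝ)).mul_const (σ * T)).const_add T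
    · simpa using (hasDerivAt_id (0 : ℝ)).mul_const (-w)
  have hh : HasDerivAt (fun t : ℝ => c₂ ε (T + t * (σ * T)) (t * -w)) (σ * T * dT) 0 := by
    have := hLcF.comp_hasDerivAt_of_eq 0 hlin3 (by norm_num)
    simpa [Function.comp_def, hLcv] using this
  have hnum : HasDerivAt (fun t : ℝ => u + σ * (s * c₂ ε (T + t * (σ * T)) (t * -w)))
      (σ * (s * (σ * T * dT))) 0 := ((hh.const_mul s).const_mul σ).const_add u
  have hden1 : HasDerivAt (fun t : ℝ => s + σ * (u * c₂ ε (T + t * (σ * T)) (t * -w)))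
      (σ * (u * (σ * T * dT))) 0 := ((hh.const_mul u).const_mul σ).const_add s
  have hden0 : s + σ * (u * c₂ ε (T + 0 * (σ * T)) (0 * -w)) ≠ 0 := by
    simpa using hden
  have hg : HasDerivAt
      (fun t : ℝ => (u + σ * (s * c₂ ε (T + t * (σ * T)) (t * -w))) /
        (s + σ * (u * c₂ ε (T + t * (σ * T)) (t * -w))))
      ((σ * (s * (σ * T * dT)) * (s + σ * (u * c₂ ε (T + 0 * (σ * T)) (0 * -w)))
        - (u + σ * (s * c₂ ε (T + 0 * (σ * T)) (0 * -w))) * (σ * (u * (σ * T * dT)))) /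
        (s + σ * (u * c₂ ε (T + 0 * (σ * T)) (0 * -w))) ^ 2) 0 :=
    hnum.div hden1 hden0
  -- differentiability of the full function
  have hproj : ∀ i : Fin 4, DifferentiableAt ℝ (fun ψ : Fin 4 → ℝ => ψ i) p := fun i =>
    (ContinuousLinearMap.proj (R := ℝ) (φ := fun _ : Fin 4 => ℝ) i).differentiableAt
  have hgp : (fun ψ : Fin 4 → ℝ => ((ψ 0, ψ 1, ψ 3) : ℝ × ℝ × ℝ)) p = (ε, T, 0) := by
    simp [hp]
  have hC : DifferentiableAt ℝ (fun ψ : Fin 4 → ℝ => c₂ (ψ 0) (ψ 1) (ψ 3)) p := by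
    have h3 : DifferentiableAt ℝ (fun ψ : Fin 4 → ℝ => ((ψ 0, ψ 1, ψ 3) : ℝ × ℝ × ℝ)) p :=
      (hproj 0).prodMk ((hproj 1).prodMk (hproj 3))
    have := (hgp ▸ hcdiff : DifferentiableAt ℝ (fun p : ℝ × ℝ × ℝ => c₂ p.1 p.2.1 p.2.2)
      ((fun ψ : Fin 4 → ℝ => ((ψ 0, ψ 1, ψ 3) : ℝ × ℝ × ℝ)) p))
    exact this.comp p h3
  have hS : DifferentiableAt ℝ (fun ψ : Fin 4 → ℝ => Real.sqrt (1 + (ψ 2) ^ 2)) p := by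
    have hin : DifferentiableAt ℝ (fun ψ : Fin 4 → ℝ => 1 + (ψ 2) ^ 2) p :=
      ((hproj 2).pow 2).const_add 1
    have hpos : ((fun ψ : Fin 4 → ℝ => 1 + (ψ 2) ^ 2) p) ≠ 0 := by
      have : (0:ℝ) < 1 + (p 2) ^ 2 := by positivity
      exact this.ne'
    exact hin.sqrt hpos
  have hDENp : (Real.sqrt (1 + (p 2) ^ 2) + σ * (p 2 * c₂ (p 0) (p 1) (p 3))) ≠ 0 := by
    simpa [hp] using hden
  have hF : DifferentiableAt ℝ
      (fun ψ : Fin 4 → ℝ =>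
        (ψ 2 + σ * (Real.sqrt (1 + (ψ 2) ^ 2) * c₂ (ψ 0) (ψ 1) (ψ 3))) /
          (Real.sqrt (1 + (ψ 2) ^ 2) + σ * (ψ 2 * c₂ (ψ 0) (ψ 1) (ψ 3)))) p := by
    have hnumd : DifferentiableAt ℝ
        (fun ψ : Fin 4 → ℝ => ψ 2 + σ * (Real.sqrt (1 + (ψ 2) ^ 2) * c₂ (ψ 0) (ψ 1) (ψ 3))) p :=
      (hproj 2).add (((hS.mul hC)).const_mul σ)
    have hdend : DifferentiableAt ℝ
        (fun ψ : Fin 4 → ℝ => Real.sqrt (1 + (ψ 2) ^ 2) + σ * (ψ 2 * c₂ (ψ 0) (ψ 1) (ψ 3))) p :=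
      hS.add (((hproj 2).mul hC).const_mul σ)
    have := hnumd.mul ((hdend.inv hDENp))
    simpa only [div_eq_mul_inv, Pi.mul_def, Pi.inv_def] using this
  -- line composition
  have hlinep : HasDerivAt (fun t : ℝ => p + t • v) v 0 := by
    simpa using ((hasDerivAt_id (0 : ℝ)).smul_const v).const_add p
  have hcomp : HasDerivAt
      (fun t : ℝ =>
        ((p + t • v) 2 + σ * (Real.sqrt (1 + ((p + t • v) 2) ^ 2)
            * c₂ ((p + t • v) 0) ((p + t • v) 1) ((p + t • v) 3))) /
          (Real.sqrt (1 + ((p + t • v) 2) ^ 2)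
            + σ * ((p + t • v) 2 * c₂ ((p + t • v) 0) ((p + t • v) 1) ((p + t • v) 3))))
      (fderiv ℝ
        (fun ψ : Fin 4 → ℝ =>
          (ψ 2 + σ * (Real.sqrt (1 + (ψ 2) ^ 2) * c₂ (ψ 0) (ψ 1) (ψ 3))) /
            (Real.sqrt (1 + (ψ 2) ^ 2) + σ * (ψ 2 * c₂ (ψ 0) (ψ 1) (ψ 3)))) p v) 0 := by
    have := hF.hasFDerivAt.comp_hasDerivAt_of_eq 0 hlinep (by simp)
    simpa [Function.comp_def] using this
  have heq : (fun t : ℝ =>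
        ((p + t • v) 2 + σ * (Real.sqrt (1 + ((p + t • v) 2) ^ 2)
            * c₂ ((p + t • v) 0) ((p + t • v) 1) ((p + t • v) 3))) /
          (Real.sqrt (1 + ((p + t • v) 2) ^ 2)
            + σ * ((p + t • v) 2 * c₂ ((p + t • v) 0) ((p + t • v) 1) ((p + t • v) 3))))
      = (fun t : ℝ => (u + σ * (s * c₂ ε (T + t * (σ * T)) (t * -w))) /
        (s + σ * (u * c₂ ε (T + t * (σ * T)) (t * -w)))) := by
    funext t
    have e0 : (p + t • v) 0 = ε := by simp [hp, hv]
    have e1 : (p + t • v) 1 = T + t * (σ * T) := by simp [hp, hv]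
    have e2 : (p + t • v) 2 = u := by simp [hp, hv]
    have e3 : (p + t • v) 3 = t * -w := by simp [hp, hv]
    rw [e0, e1, e2, e3, hs]
  rw [heq] at hcomp
  have hval := hg.unique hcomp
  rw [← hval]
  have hs2 : s ^ 2 = 1 + u ^ 2 := Real.sq_sqrt (by positivity)
  have hde : s + σ * (u * c₂ ε (T + 0 * (σ * T)) (0 * -w)) = s + σ * (u * c) := by norm_num [hc]
  rw [hde]
  have hnu : c₂ ε (T + 0 * (σ * T)) (0 * -w) = c := by norm_num [hc]
  rw [hnu]
  have hdne : s + σ * (u * c) ≠ 0 := hden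
  rw [div_eq_iff (pow_ne_zero 2 hdne)]
  have hD : σ * u * c + s ≠ 0 := by
    intro h; apply hdne; linear_combination h
  have hinv : (σ * u * c + s) * (σ * u * c + s)⁻¹ = 1 := mul_inv_cancel₀ hD
  field_simp [hD]
  linear_combination (σ ^ 2 * T * dT) * hs2 - (σ ^ 2 * T * dT) * hinv


/-- Diffusive modes of the Israel–Stewart diffusion system at the reference
state `q* = 0`: with `ψ = (ε, T, u, q)`, `λ₂± = (u ± u⁰c₂)/(u⁰ ± uc₂)`,
`u⁰ = √(1+u²)`, `c₂* = c₂(ε,T,0)`, and eigenvectors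
`r₂±* = (0, ±T, 0, -u⁰nc₂*)ᵀ`, one has
`r₂±* · ∇_ψ λ₂± = (u⁰ ± uc₂*)⁻² T ∂c₂*/∂T`; hence `λ₂±` are genuinely
nonlinear at `ψ*` iff `∂c₂*/∂T ≠ 0`. -/
theorem diffusion_modes_genuine_nonlinearity
    (ε T u n : ℝ) (c₂ : ℝ → ℝ → ℝ → ℝ)
    (hT : 0 < T) (hc0 : 0 < c₂ ε T 0) (hc1 : c₂ ε T 0 < 1)
    (hcdiff : DifferentiableAt ℝ
      (fun p : ℝ × ℝ × ℝ => c₂ p.1 p.2.1 p.2.2) (ε, T, 0))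
    (hcq : deriv (fun q => c₂ ε T q) 0 = 0) :
    (fderiv ℝ
        (fun ψ : Fin 4 → ℝ =>
          (ψ 2 + Real.sqrt (1 + (ψ 2) ^ 2) * c₂ (ψ 0) (ψ 1) (ψ 3)) /
            (Real.sqrt (1 + (ψ 2) ^ 2) + ψ 2 * c₂ (ψ 0) (ψ 1) (ψ 3)))
        ![ε, T, u, 0]
        ![0, T, 0, -(Real.sqrt (1 + u ^ 2) * n * c₂ ε T 0)] =
      ((Real.sqrt (1 + u ^ 2) + u * c₂ ε T 0) ^ 2)⁻¹ * T *
        deriv (fun T' => c₂ ε T' 0) T) ∧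
    (fderiv ℝ
        (fun ψ : Fin 4 → ℝ =>
          (ψ 2 - Real.sqrt (1 + (ψ 2) ^ 2) * c₂ (ψ 0) (ψ 1) (ψ 3)) /
            (Real.sqrt (1 + (ψ 2) ^ 2) - ψ 2 * c₂ (ψ 0) (ψ 1) (ψ 3)))
        ![ε, T, u, 0]
        ![0, -T, 0, -(Real.sqrt (1 + u ^ 2) * n * c₂ ε T 0)] =
      ((Real.sqrt (1 + u ^ 2) - u * c₂ ε T 0) ^ 2)⁻¹ * T *
        deriv (fun T' => c₂ ε T' 0) T) ∧
    (((Real.sqrt (1 + u ^ 2) + u * c₂ ε T 0) ^ 2)⁻¹ * T *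
        deriv (fun T' => c₂ ε T' 0) T ≠ 0 ↔
      deriv (fun T' => c₂ ε T' 0) T ≠ 0) ∧
    (((Real.sqrt (1 + u ^ 2) - u * c₂ ε T 0) ^ 2)⁻¹ * T *
        deriv (fun T' => c₂ ε T' 0) T ≠ 0 ↔
      deriv (fun T' => c₂ ε T' 0) T ≠ 0) := by
  have habs : |u * c₂ ε T 0| < Real.sqrt (1 + u ^ 2) := by
    have h1 : |u| < Real.sqrt (1 + u ^ 2) := by
      rw [show |u| = Real.sqrt (u ^ 2) from (Real.sqrt_sq_eq_abs u).symm]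
      exact Real.sqrt_lt_sqrt (by positivity) (by linarith)
    calc |u * c₂ ε T 0| = |u| * c₂ ε T 0 := by
            rw [abs_mul, abs_of_pos hc0]
      _ ≤ |u| * 1 := by nlinarith [abs_nonneg u]
      _ < Real.sqrt (1 + u ^ 2) := by simpa using h1
  have hdp : Real.sqrt (1 + u ^ 2) + 1 * (u * c₂ ε T 0) ≠ 0 := by
    have := neg_abs_le (u * c₂ ε T 0)
    have : (0:ℝ) < Real.sqrt (1 + u ^ 2) + 1 * (u * c₂ ε T 0) := by linarith
    exact this.ne'
  have hdm : Real.sqrt (1 + u ^ 2) + (-1) * (u * c₂ ε T 0) ≠ 0 := by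
    have := le_abs_self (u * c₂ ε T 0)
    have : (0:ℝ) < Real.sqrt (1 + u ^ 2) + (-1) * (u * c₂ ε T 0) := by linarith
    exact this.ne'
  have hA := aux_diffusion ε T u n 1 c₂ hdp hcdiff hcq
  have hB := aux_diffusion ε T u n (-1) c₂ hdm hcdiff hcq
  have hdp' : Real.sqrt (1 + u ^ 2) + u * c₂ ε T 0 ≠ 0 := by
    simpa using hdp
  have hdm' : Real.sqrt (1 + u ^ 2) - u * c₂ ε T 0 ≠ 0 := by
    intro h; apply hdm; linarith
  refine ⟨?_, ?_, ?_, ?_⟩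
  · rw [show (fun ψ : Fin 4 → ℝ =>
          (ψ 2 + Real.sqrt (1 + (ψ 2) ^ 2) * c₂ (ψ 0) (ψ 1) (ψ 3)) /
            (Real.sqrt (1 + (ψ 2) ^ 2) + ψ 2 * c₂ (ψ 0) (ψ 1) (ψ 3)))
        = (fun ψ : Fin 4 → ℝ =>
          (ψ 2 + 1 * (Real.sqrt (1 + (ψ 2) ^ 2) * c₂ (ψ 0) (ψ 1) (ψ 3))) /
            (Real.sqrt (1 + (ψ 2) ^ 2) + 1 * (ψ 2 * c₂ (ψ 0) (ψ 1) (ψ 3))))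
        from funext fun ψ => by ring]
    rw [show (![0, T, 0, -(Real.sqrt (1 + u ^ 2) * n * c₂ ε T 0)] : Fin 4 → ℝ)
        = ![0, 1 * T, 0, -(Real.sqrt (1 + u ^ 2) * n * c₂ ε T 0)] by norm_num]
    rw [hA]
    norm_num
  · rw [show (fun ψ : Fin 4 → ℝ =>
          (ψ 2 - Real.sqrt (1 + (ψ 2) ^ 2) * c₂ (ψ 0) (ψ 1) (ψ 3)) /
            (Real.sqrt (1 + (ψ 2) ^ 2) - ψ 2 * c₂ (ψ 0) (ψ 1) (ψ 3)))
        = (fun ψ : Fin 4 → ℝ =>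
          (ψ 2 + (-1) * (Real.sqrt (1 + (ψ 2) ^ 2) * c₂ (ψ 0) (ψ 1) (ψ 3))) /
            (Real.sqrt (1 + (ψ 2) ^ 2) + (-1) * (ψ 2 * c₂ (ψ 0) (ψ 1) (ψ 3))))
        from funext fun ψ => by ring]
    rw [show (![0, -T, 0, -(Real.sqrt (1 + u ^ 2) * n * c₂ ε T 0)] : Fin 4 → ℝ)
        = ![0, (-1) * T, 0, -(Real.sqrt (1 + u ^ 2) * n * c₂ ε T 0)] by norm_num]
    rw [hB]
    rw [show Real.sqrt (1 + u ^ 2) + (-1) * (u * c₂ ε T 0)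
        = Real.sqrt (1 + u ^ 2) - u * c₂ ε T 0 by ring]
    ring
  · have hX : ((Real.sqrt (1 + u ^ 2) + u * c₂ ε T 0) ^ 2)⁻¹ * T ≠ 0 :=
      mul_ne_zero (inv_ne_zero (pow_ne_zero 2 hdp')) hT.ne'
    rw [mul_ne_zero_iff]
    simp [hX]
  · have hX : ((Real.sqrt (1 + u ^ 2) - u * c₂ ε T 0) ^ 2)⁻¹ * T ≠ 0 :=
      mul_ne_zero (inv_ne_zero (pow_ne_zero 2 hdm')) hT.ne'
    rw [mul_ne_zero_iff]
    simp [hX]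
end
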